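/- Let w be a string, r = [i..j] a run in w with smallest period p, and ≺ a lexicographic order such that w[j+1] ≺ w[j+1-p] (where w[|w|+1] is a sentinel character not occurring in w). Then any substring w[i'..j'] of r, of length p, that is a Lyndon word with respect to ≺ (an L-root), is the longest Lyndon word with respect to ≺ that is a prefix of w[i'..|w|]. -/

import Mathlib

/-- A string (list) is a Lyndon word w.r.t. the lexicographic order:
it is strictly smaller than every nonempty proper suffix. -/
def IsLyndon {α : Type*} [LinearOrder α] (w : List α) : Prop :=
  w ≠ [] ∧ ∀ i, 0 < i → i < w.length → List.Lex (· < ·) w (w.drop i)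

/-- `p` is a period of `w`: `w[i] = w[i+p]` whenever both positions are valid. -/
def HasPeriod {α : Type*} (w : List α) (p : ℕ) : Prop :=
  ∀ i, i + p < w.length → w[i]? = w[i + p]?

/-- `substr w i j` is the substring `w[i..j]` (1-indexed, inclusive). -/
def substr {α : Type*} (w : List α) (i j : ℕ) : List α :=
  (w.drop (i - 1)).take (j - i + 1)

/-- `[i..j]` (1-indexed) is a run of `w` with (smallest) period `p`:
`p` is the smallest period of `w[i..j]`, the exponent is at least 2, and the
periodicity with period `p` extends neither to the left nor to the right. -/
def IsRun {α : Type*} (w : List α) (i j p : ℕ) : Prop :=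
  1 ≤ i ∧ i ≤ j ∧ j ≤ w.length ∧ 0 < p ∧
  HasPeriod (substr w i j) p ∧
  (∀ q, 0 < q → q < p → ¬ HasPeriod (substr w i j) q) ∧
  2 * p ≤ j - i + 1 ∧
  (i = 1 ∨ ¬ HasPeriod (substr w (i - 1) j) p) ∧
  (j = w.length ∨ ¬ HasPeriod (substr w i (j + 1)) p)

/-- Helper: a list is never lex-smaller than its own prefix (`take`). -/
lemma not_lex_take_aux {α : Type*} [LinearOrder α] :
    ∀ (l : List α) (n : ℕ), ¬ List.Lex (· < ·) l (l.take n) := by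
  intro l
  induction l with
  | nil => intro n h; rw [List.take_nil] at h; cases h
  | cons a t ih =>
    intro n h
    cases n with
    | zero => simp at h
    | succ n =>
      simp only [List.take_succ_cons] at h
      cases h with
      | rel hr => exact lt_irrefl _ hr
      | cons h' => exact ih n h'

/-- Helper: asymmetry of the lexicographic order. -/
lemma lex_asymm_aux {α : Type*} [LinearOrder α] {l₁ l₂ : List α}
    (h : List.Lex (· < ·) l₁ l₂) : ¬ List.Lex (· < ·) l₂ l₁ := by
  induction h with
  | nil => intro h2; cases h2
  | rel hr =>
    intro h2
    cases h2 with
    | rel hr2 => exact absurd hr (lt_asymm hr2)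
    | cons _ => exact lt_irrefl _ hr
  | cons _ ih =>
    intro h2
    cases h2 with
    | rel hr2 => exact lt_irrefl _ hr2
    | cons h2' => exact ih h2'

/-- Helper: construct a lex comparison from a first differing index. -/
lemma lex_of_get?_aux {α : Type*} [LinearOrder α] :
    ∀ (k : ℕ) (l₁ l₂ : List α) (x y : α), l₁[k]? = some x → l₂[k]? = some y → x < y →
      (∀ s, s < k → l₁[s]? = l₂[s]?) → List.Lex (· < ·) l₁ l₂ := by
  intro k
  induction k with
  | zero =>
    intro l₁ l₂ x y h1 h2 hxy _
    cases l₁ with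
    | nil => simp at h1
    | cons a t₁ =>
      cases l₂ with
      | nil => simp at h2
      | cons b t₂ =>
        simp only [List.getElem?_cons_zero] at h1 h2
        obtain rfl : a = x := by injection h1
        obtain rfl : b = y := by injection h2
        exact List.Lex.rel hxy
  | succ k ih =>
    intro l₁ l₂ x y h1 h2 hxy hagree
    cases l₁ with
    | nil => simp at h1
    | cons a t₁ =>
      cases l₂ with
      | nil => simp at h2
      | cons b t₂ =>
        have hab : a = b := by
          have := hagree 0 (Nat.succ_pos k)
          simpa using this
        subst hab
        exact List.Lex.cons (ih t₁ t₂ x y (by simpa using h1) (by simpa using h2) hxy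
          (fun s hs => by
            have := hagree (s + 1) (by omega)
            simpa using this))
/-- Lemma 3.3 of the "Runs" theorem paper: if `[i..j]` is a run of `w` with period `p`
and `w[j+1] ≺ w[j+1-p]` (the last character of `w` acts as a sentinel not occurring
elsewhere), then any L-root `w[i'..j']` (length-`p` Lyndon factor of the run) is the
longest Lyndon word that is a prefix of `w[i'..|w|]`. -/
theorem stmt5 {α : Type*} [LinearOrder α] [Inhabited α] (w : List α) (i j p : ℕ)
    (hrun : IsRun w i j p) (hj : j < w.length)
    (hsent : ∀ m, m + 1 < w.length → w.getD m default ≠ w.getD (w.length - 1) default)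
    (hord : w.getD j default < w.getD (j - p) default) :
    ∀ i' j', i ≤ i' → j' ≤ j → j' + 1 = i' + p →
      IsLyndon (substr w i' j') →
      ∀ m, p < m → m ≤ w.length - (i' - 1) →
        ¬ IsLyndon ((w.drop (i' - 1)).take m) := by
  obtain ⟨h1i, hij, hjw, hp0, hper, -, -, -, -⟩ := hrun
  -- the period of the run, expressed on `w` itself
  have hsub : ∀ y, y < j - i + 1 → (substr w i j)[y]? = w[i - 1 + y]? := by
    intro y hy
    unfold substr
    rw [List.getElem?_take_of_lt hy, List.getElem?_drop]
  have hlen : (substr w i j).length = j - i + 1 := by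
    unfold substr
    rw [List.length_take, List.length_drop]
    omega
  have hP : ∀ x, i - 1 ≤ x → x + p < j → w[x]? = w[x + p]? := by
    intro x hx hxp
    have h1 := hper (x - (i - 1)) (by rw [hlen]; omega)
    rw [hsub _ (by omega), hsub _ (by omega)] at h1
    have e1 : i - 1 + (x - (i - 1)) = x := by omega
    have e2 : i - 1 + (x - (i - 1) + p) = x + p := by omega
    rw [e1, e2] at h1
    exact h1
  have hget : ∀ n, n < w.length → w[n]? = some (w.getD n default) := by
    intro n hn
    rw [List.getD_eq_getElem?_getD]
    cases hh : w[n]? with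
    | none => exact absurd (List.getElem?_eq_none_iff.mp hh) (by omega)
    | some c => simp
  intro i' j' hii' hj'j hpj hlynroot m hpm hmle hcontra
  obtain ⟨-, hlyn⟩ := hcontra
  set u : List α := (w.drop (i' - 1)).take m with hu
  have hulen : u.length = m := by
    rw [hu, List.length_take, List.length_drop]
    omega
  have huget : ∀ s, s < m → u[s]? = w[i' - 1 + s]? := by
    intro s hs
    rw [hu, List.getElem?_take_of_lt hs, List.getElem?_drop]
  have hlynP : List.Lex (· < ·) u (u.drop p) :=
    hlyn p hp0 (by rw [hulen]; exact hpm)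
  by_cases hcase : i' - 1 + m ≤ j
  · -- `u` lies inside the run, hence it has period `p` and a border: contradiction
    have hdropeq : u.drop p = u.take (m - p) := by
      apply List.ext_getElem?
      intro s
      rw [List.getElem?_drop]
      by_cases hs : s < m - p
      · rw [List.getElem?_take_of_lt hs, huget (p + s) (by omega), huget s (by omega)]
        have hps := hP (i' - 1 + s) (by omega) (by omega)
        rw [hps]
        congr 1
        omega
      · have e1 : u[p + s]? = none := List.getElem?_eq_none_iff.mpr (by rw [hulen]; omega)
        have e2 : (u.take (m - p))[s]? = none :=
          List.getElem?_eq_none_iff.mpr (by rw [List.length_take, hulen]; omega)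
        rw [e1, e2]
    rw [hdropeq] at hlynP
    exact not_lex_take_aux u (m - p) hlynP
  · -- `u` reaches past the run: the suffix `u.drop p` is smaller, contradiction
    have hlex2 : List.Lex (· < ·) (u.drop p) u := by
      apply lex_of_get?_aux (j - p - (i' - 1)) (u.drop p) u
        (w.getD j default) (w.getD (j - p) default) _ _ hord
      · -- agreement before the first difference
        intro s hs
        rw [List.getElem?_drop, huget (p + s) (by omega), huget s (by omega)]
        have hps := hP (i' - 1 + s) (by omega) (by omega)
        rw [hps]
        congr 1
        omega
      · rw [List.getElem?_drop, huget (p + (j - p - (i' - 1))) (by omega)]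
        rw [show i' - 1 + (p + (j - p - (i' - 1))) = j by omega]
        exact hget j hj
      · rw [huget (j - p - (i' - 1)) (by omega)]
        rw [show i' - 1 + (j - p - (i' - 1)) = j - p by omega]
        exact hget (j - p) (by omega)
    exact lex_asymm_aux hlynP hlex2
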